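/- Under the conditions of the GPA convergence theorem, if the base optimizer satisfies the regret bound Σ_{t=1}^T ⟨∇F(y^{(t)}), z^{(t)} - x_*⟩ ≤ C√T for some constant C ≥ 0, then F(x̄^{(T)}) - F(x_*) ≤ C/√T + (μ_x/(1-μ_x)) (F(x^{(1)}) - F(x_*))/T, i.e., F(x̄^{(T)}) - F(x_*) = O(1/√T). -/

import Mathlib

open RealInnerProductSpace

lemma gpa_grad_ineq {n : ℕ} {F : EuclideanSpace ℝ (Fin n) → ℝ}
    {g p : EuclideanSpace ℝ (Fin n)}
    (hconv : ConvexOn ℝ Set.univ F) (hg : HasGradientAt F g p)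
    (u : EuclideanSpace ℝ (Fin n)) :
    F p + ⟪g, u - p⟫ ≤ F u := by
  set γ : ℝ →ᵃ[ℝ] EuclideanSpace ℝ (Fin n) := AffineMap.lineMap p u with hγdef
  have hline : ConvexOn ℝ Set.univ (F ∘ γ) := by
    simpa using hconv.comp_affineMap γ
  have hγ : HasDerivAt (fun θ : ℝ => γ θ) (u - p) 0 := by
    have h1 : (fun θ : ℝ => γ θ) = fun θ : ℝ => θ • (u - p) + p := by
      funext θ
      simp [hγdef, AffineMap.lineMap_apply_module']
    rw [h1]
    simpa using ((hasDerivAt_id (0 : ℝ)).smul_const (u - p)).add_const p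
  have hcomp : HasDerivAt (F ∘ γ) ⟪g, u - p⟫ 0 := by
    have hp0 : γ (0 : ℝ) = p := AffineMap.lineMap_apply_zero p u
    have hF : HasFDerivAt F (InnerProductSpace.toDual ℝ _ g) (γ (0:ℝ)) := by
      rw [hp0]; exact hg.hasFDerivAt
    simpa [InnerProductSpace.toDual_apply_apply] using hF.comp_hasDerivAt (0 : ℝ) hγ
  have hs := hline.le_slope_of_hasDerivAt (Set.mem_univ (0:ℝ)) (Set.mem_univ (1:ℝ))
    one_pos hcomp
  have h0 : (F ∘ γ) 0 = F p := by simp [hγdef]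
  have h1 : (F ∘ γ) 1 = F u := by simp [hγdef]
  rw [slope_def_field, h0, h1, show (1:ℝ)-0 = 1 by norm_num, div_one] at hs
  linarith

set_option maxHeartbeats 1000000 in
/-- Corollary: if the base optimizer has regret `≤ C√T`, then GPA's average iterate
converges at rate `O(1/√T)`. -/
theorem gpa_convergence_rate
    (n : ℕ) (μx μy : ℝ) (hμx0 : 0 ≤ μx) (hμx1 : μx < 1) (hμy0 : 0 ≤ μy) (hμy1 : μy < 1)
    (F : EuclideanSpace ℝ (Fin n) → ℝ)
    (F' : EuclideanSpace ℝ (Fin n) → EuclideanSpace ℝ (Fin n))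
    (hgrad : ∀ p, HasGradientAt F (F' p) p)
    (hconv : ConvexOn ℝ Set.univ F)
    (xstar : EuclideanSpace ℝ (Fin n)) (hmin : ∀ p, F xstar ≤ F p)
    (x y z : ℕ → EuclideanSpace ℝ (Fin n))
    (hy : ∀ t ≥ 1, y t = μy • x t + (1 - μy) • z t)
    (hx : ∀ t ≥ 1, x (t + 1) = μx • x t + (1 - μx) • z (t + 1))
    (hinit : z 1 = x 1) (hconv0 : x 0 = x 1)
    (T : ℕ) (hT : 1 ≤ T)
    (C : ℝ) (hC : 0 ≤ C)
    (hregret : ∑ t ∈ Finset.Icc 1 T, ⟪F' (y t), z t - xstar⟫ ≤ C * Real.sqrt T) :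
    F ((1 / (T : ℝ)) • ∑ t ∈ Finset.Icc 1 T, x t) - F xstar ≤
      C / Real.sqrt T + (μx / (1 - μx)) * (F (x 1) - F xstar) / T := by
  have hμx' : (0:ℝ) < 1 - μx := by linarith
  have hμy' : (0:ℝ) < 1 - μy := by linarith
  have hd : (0:ℝ) < 1 - μx * μy := by nlinarith
  set a : ℕ → ℝ := fun t => F (x t) - F xstar with ha
  have grad' : ∀ p u, F p - F u ≤ ⟪F' p, p - u⟫ := by
    intro p u
    have h := gpa_grad_ineq hconv (hgrad p) u
    have h2 : (⟪F' p, u - p⟫ : ℝ) = -⟪F' p, p - u⟫ := by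
      rw [← neg_sub p u, inner_neg_right]
    linarith
  -- per-step inequality
  have key : ∀ t, 1 ≤ t →
      (1 - μx) * a t + μx * (a t - a (t-1)) ≤ (1-μx) * ⟪F' (y t), z t - xstar⟫ := by
    intro t ht
    obtain ⟨k, rfl⟩ : ∃ k, t = k + 1 := ⟨t - 1, by omega⟩
    rcases Nat.eq_zero_or_pos k with hk0 | hk
    · subst hk0
      have hy1 : y 1 = x 1 := by
        rw [hy 1 le_rfl, hinit]; module
      have hs1 : a 1 ≤ ⟪F' (y 1), z 1 - xstar⟫ := by
        rw [hy1, hinit]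
        simpa [ha] using grad' (x 1) xstar
      have ha01 : a 0 = a 1 := by simp [ha, hconv0]
      simp only [Nat.add_sub_cancel]
      rw [ha01]
      have := mul_le_mul_of_nonneg_left hs1 hμx'.le
      simp only [Nat.zero_add]
      linarith
    · have hxk := hx k hk
      have hyk := hy (k+1) (by omega)
      have hvec : (1-μy) • (z (k+1) - xstar)
          = μy • (y (k+1) - x (k+1)) + (1-μy) • (y (k+1) - xstar) := by
        rw [hyk]; module
      have hinner : (1-μy) * ⟪F' (y (k+1)), z (k+1) - xstar⟫
          = μy * ⟪F' (y (k+1)), y (k+1) - x (k+1)⟫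
            + (1-μy) * ⟪F' (y (k+1)), y (k+1) - xstar⟫ := by
        have h := congrArg (fun v => (⟪F' (y (k+1)), v⟫ : ℝ)) hvec
        simp only [inner_add_right, real_inner_smul_right] at h
        exact h
      have hI1 : F (y (k+1)) - F (x (k+1)) ≤ ⟪F' (y (k+1)), y (k+1) - x (k+1)⟫ := grad' _ _
      have hI2 : F (y (k+1)) - F xstar ≤ ⟪F' (y (k+1)), y (k+1) - xstar⟫ := grad' _ _
      have hveq : (1 - μx*μy) • x (k+1) = (μx*(1-μy)) • x k + (1-μx) • y (k+1) := by
        rw [hyk, hxk]; module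
      set α : ℝ := μx*(1-μy)/(1-μx*μy) with hα
      have hα0 : 0 ≤ α := div_nonneg (mul_nonneg hμx0 hμy'.le) hd.le
      have hdα : (1-μx*μy) * α = μx*(1-μy) := by
        rw [hα, mul_div_cancel₀ _ hd.ne']
      have hdα2 : (1-μx*μy) * (1-α) = 1-μx := by
        rw [mul_sub, mul_one, hdα]; ring
      have hα1 : α ≤ 1 := by nlinarith [hdα2]
      have hXcomb : x (k+1) = α • x k + (1-α) • y (k+1) := by
        have h := congrArg (fun v => (1-μx*μy)⁻¹ • v) hveq
        simp only [smul_add, smul_smul] at h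
        rw [inv_mul_cancel₀ hd.ne', one_smul] at h
        have e1 : (1-μx*μy)⁻¹ * (μx*(1-μy)) = α := by
          rw [hα, div_eq_inv_mul]
        have e2 : (1-μx*μy)⁻¹ * (1-μx) = 1-α := by
          rw [← hdα2, ← mul_assoc, inv_mul_cancel₀ hd.ne', one_mul]
        rw [h, e1, e2]
      have hFX : F (x (k+1)) ≤ α * F (x k) + (1-α) * F (y (k+1)) := by
        calc F (x (k+1)) = F (α • x k + (1-α) • y (k+1)) := by rw [← hXcomb]
          _ ≤ α * F (x k) + (1-α) * F (y (k+1)) :=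
            hconv.2 (Set.mem_univ _) (Set.mem_univ _) hα0 (by linarith) (by ring)
      have hFXd : (1-μx*μy) * F (x (k+1)) ≤ μx*(1-μy) * F (x k) + (1-μx) * F (y (k+1)) := by
        have h := mul_le_mul_of_nonneg_left hFX hd.le
        calc (1-μx*μy) * F (x (k+1))
            ≤ (1-μx*μy) * (α * F (x k) + (1-α) * F (y (k+1))) := h
          _ = ((1-μx*μy)*α) * F (x k) + ((1-μx*μy)*(1-α)) * F (y (k+1)) := by ring
          _ = μx*(1-μy) * F (x k) + (1-μx) * F (y (k+1)) := by rw [hdα, hdα2]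
      have hinner' : (1-μx)*((1-μy) * ⟪F' (y (k+1)), z (k+1) - xstar⟫)
          = (1-μx)*(μy * ⟪F' (y (k+1)), y (k+1) - x (k+1)⟫
            + (1-μy) * ⟪F' (y (k+1)), y (k+1) - xstar⟫) := by rw [hinner]
      simp only [Nat.add_sub_cancel, ha]
      rw [← mul_le_mul_iff_right₀ hμy']
      linarith [hinner',
        mul_le_mul_of_nonneg_left hI1 (mul_nonneg hμx'.le hμy0),
        mul_le_mul_of_nonneg_left hI2 (mul_nonneg hμx'.le hμy'.le),
        hFXd, mul_le_mul_of_nonneg_left hFXd hμy0,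
        mul_le_mul_of_nonneg_left hFXd hμy'.le]
  -- summing up
  have hsum1 : ∑ t ∈ Finset.Icc 1 T, ((1-μx) * a t + μx * (a t - a (t-1)))
      ≤ (1-μx) * ∑ t ∈ Finset.Icc 1 T, ⟪F' (y t), z t - xstar⟫ := by
    rw [Finset.mul_sum]
    exact Finset.sum_le_sum fun i hi => key i (Finset.mem_Icc.mp hi).1
  have htel : ∑ t ∈ Finset.Icc 1 T, (a t - a (t-1)) = a T - a 0 := by
    rw [← Finset.Ico_add_one_right_eq_Icc, Finset.sum_Ico_eq_sum_range]
    have hcong : ∀ i ∈ Finset.range (T + 1 - 1), a (1+i) - a (1+i-1) = a (i+1) - a i := by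
      intro i _
      congr 2 <;> omega
    rw [Finset.sum_congr rfl hcong]
    have : T + 1 - 1 = T := by omega
    rw [this, Finset.sum_range_sub]
  have ha01 : a 0 = a 1 := by simp [ha, hconv0]
  have haT : 0 ≤ a T := sub_nonneg.2 (hmin (x T))
  have hSa : ∑ t ∈ Finset.Icc 1 T, a t ≤ C * Real.sqrt T + μx/(1-μx) * a 1 := by
    have hsum2 : ∑ t ∈ Finset.Icc 1 T, ((1-μx)*a t + μx*(a t - a (t-1)))
        = (1-μx) * ∑ t ∈ Finset.Icc 1 T, a t + μx * (a T - a 0) := by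
      rw [Finset.sum_add_distrib, ← Finset.mul_sum, ← Finset.mul_sum, htel]
    have hR := mul_le_mul_of_nonneg_left hregret hμx'.le
    rw [← mul_le_mul_iff_right₀ hμx']
    have hcm : (1-μx) * (C * Real.sqrt T + μx/(1-μx) * a 1)
        = (1-μx) * (C * Real.sqrt T) + μx * a 1 := by
      field_simp
    rw [hcm]
    have ha01' : μx * a 0 = μx * a 1 := by rw [ha01]
    linarith [hsum1, hsum2, hR, mul_nonneg hμx0 haT, ha01']
  -- Jensen
  have hTpos : (0:ℝ) < T := by exact_mod_cast hT
  have hcard : (Finset.Icc 1 T).card = T := by rw [Nat.card_Icc]; omega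
  have hw : ∑ _t ∈ Finset.Icc 1 T, (1/(T:ℝ)) = 1 := by
    rw [Finset.sum_const, hcard, nsmul_eq_mul]
    field_simp
  have hjen : F ((1/(T:ℝ)) • ∑ t ∈ Finset.Icc 1 T, x t)
      ≤ ∑ t ∈ Finset.Icc 1 T, (1/(T:ℝ)) * F (x t) := by
    have h := hconv.map_sum_le (fun i _ => by positivity) hw (fun i _ => Set.mem_univ (x i))
    rw [Finset.smul_sum]
    simpa [smul_eq_mul] using h
  have hsplit : ∑ t ∈ Finset.Icc 1 T, (1/(T:ℝ)) * F (x t) - F xstar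
      = (1/(T:ℝ)) * ∑ t ∈ Finset.Icc 1 T, a t := by
    rw [Finset.mul_sum]
    have h1 : ∑ t ∈ Finset.Icc 1 T, (1/(T:ℝ)) * a t
        = ∑ t ∈ Finset.Icc 1 T, (1/(T:ℝ)) * F (x t)
          - ∑ _t ∈ Finset.Icc 1 T, (1/(T:ℝ)) * F xstar := by
      rw [← Finset.sum_sub_distrib]
      apply Finset.sum_congr rfl
      intro i _
      simp only [ha]
      ring
    have h2 : ∑ _t ∈ Finset.Icc 1 T, (1/(T:ℝ)) * F xstar = F xstar := by
      rw [Finset.sum_const, hcard, nsmul_eq_mul]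
      field_simp
    rw [h1, h2]
  have hss : (0:ℝ) < Real.sqrt T := Real.sqrt_pos.2 hTpos
  have hmm : Real.sqrt T * Real.sqrt T = (T:ℝ) := Real.mul_self_sqrt hTpos.le
  have h2 : (1/(T:ℝ)) * ∑ t ∈ Finset.Icc 1 T, a t
      ≤ (1/(T:ℝ)) * (C * Real.sqrt T + μx/(1-μx) * a 1) :=
    mul_le_mul_of_nonneg_left hSa (by positivity)
  have h3 : (1/(T:ℝ)) * (C * Real.sqrt T + μx/(1-μx) * a 1)
      = C / Real.sqrt T + μx/(1-μx) * a 1 / T := by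
    rw [mul_add]
    congr 1
    · rw [one_div, inv_mul_eq_div, div_eq_div_iff hTpos.ne' hss.ne', mul_assoc, hmm]
    · ring
  have hfin : F ((1/(T:ℝ)) • ∑ t ∈ Finset.Icc 1 T, x t) - F xstar
      ≤ (1/(T:ℝ)) * ∑ t ∈ Finset.Icc 1 T, a t := by
    rw [← hsplit]
    linarith [hjen]
  calc F ((1/(T:ℝ)) • ∑ t ∈ Finset.Icc 1 T, x t) - F xstar
      ≤ (1/(T:ℝ)) * ∑ t ∈ Finset.Icc 1 T, a t := hfin
    _ ≤ (1/(T:ℝ)) * (C * Real.sqrt T + μx/(1-μx) * a 1) := h2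
    _ = C / Real.sqrt T + μx/(1-μx) * a 1 / T := h3
    _ = C / Real.sqrt T + (μx/(1-μx)) * (F (x 1) - F xstar) / T := by rw [ha]
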